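/- Given m mutually orthogonal Latin squares of order n, each with first row (1,2,…,n), the mn × n(n−1) block matrix N = [N_{ij}] (i = 1,…,m; j = 2,…,n), where N_{ij} is the permutation matrix of row j of the i-th square, satisfies NNᵀ = (n−1)(I_m⊗I_n) + 0·(I_m⊗(J−I)_n) + 0·((J−I)_m⊗I_n) + 1·((J−I)_m⊗(J−I)_n); hence N is the incidence matrix of a resolvable semi-regular rectangular design with v = mn, b = n(n−1), r = n−1, k = m, λ₁ = λ₂ = 0, λ₃ = 1. -/

import Mathlib

open Matrix Kronecker Finset

def Jmat (m : ℕ) : Matrix (Fin m) (Fin m) ℝ := Matrix.of fun _ _ => 1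

lemma sum_ind_bij {α β : Type*} [Fintype α] [Fintype β] [DecidableEq β]
    (f : α → β) (hf : Function.Bijective f) (y : β) :
    ∑ a, (if y = f a then (1:ℝ) else 0) = 1 := by
  rw [Fintype.sum_bijective f hf _ (fun b => if y = b then (1:ℝ) else 0) (fun a => rfl)]
  simp

lemma sum_sub0 {n : ℕ} [NeZero n] (g : Fin n → ℝ) :
    (∑ j : {j : Fin n // j ≠ 0}, g j.val) = (∑ j : Fin n, g j) - g 0 := by
  rw [← Finset.sum_subtype (univ.erase (0 : Fin n)) (by simp) g,
    Finset.sum_erase_eq_sub (mem_univ _)]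

theorem mols_to_RD (m n : ℕ) [NeZero n] (hn : 2 ≤ n)
    (L : Fin m → Fin n → Fin n → Fin n)
    (hrow : ∀ i j, Function.Bijective (L i j))
    (hcol : ∀ i c, Function.Bijective (fun j => L i j c))
    (horth : ∀ i i', i ≠ i' →
      Function.Bijective (fun p : Fin n × Fin n => (L i p.1 p.2, L i' p.1 p.2)))
    (h0 : ∀ i c, L i 0 c = c)
    (N : Matrix (Fin m × Fin n) ({j : Fin n // j ≠ 0} × Fin n) ℝ)
    (hN : N = fun p q => if p.2 = L p.1 q.1.val q.2 then 1 else 0) :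
    N * Nᵀ =
      ((n : ℝ) - 1) • ((1 : Matrix (Fin m) (Fin m) ℝ) ⊗ₖ (1 : Matrix (Fin n) (Fin n) ℝ))
      + (0 : ℝ) • ((1 : Matrix (Fin m) (Fin m) ℝ) ⊗ₖ (Jmat n - 1))
      + (0 : ℝ) • ((Jmat m - 1) ⊗ₖ (1 : Matrix (Fin n) (Fin n) ℝ))
      + (1 : ℝ) • ((Jmat m - 1) ⊗ₖ (Jmat n - 1)) ∧
    (∀ q, ∑ p, N p q = (m : ℝ)) ∧
    (∀ p, ∑ q, N p q = (n : ℝ) - 1) := by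
  subst hN
  have rowsum : ∀ (i : Fin m) (x : Fin n),
      (∑ q : {j : Fin n // j ≠ 0} × Fin n,
        (if x = L i q.1.val q.2 then (1:ℝ) else 0)) = (n : ℝ) - 1 := by
    intro i x
    rw [Fintype.sum_prod_type,
      sum_sub0 (fun j => ∑ c, (if x = L i j c then (1:ℝ) else 0))]
    have h1 : ∀ j : Fin n, (∑ c, (if x = L i j c then (1:ℝ) else 0)) = 1 :=
      fun j => sum_ind_bij _ (hrow i j) x
    simp [h1, h0]
  refine ⟨?_, ?_, ?_⟩
  · ext ⟨i, x⟩ ⟨i', y⟩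
    erw [mul_apply]; simp only [Matrix.transpose, of_apply]
    simp only [mul_apply, transpose_apply, Matrix.add_apply, Matrix.smul_apply, kroneckerMap_apply,
      one_apply, Matrix.sub_apply, Jmat, of_apply, smul_eq_mul, zero_mul, one_mul, add_zero, zero_add,
      ite_zero_mul_ite_zero, mul_one]
    by_cases hii : i = i'
    · subst hii
      by_cases hxy : x = y
      · subst hxy
        simp only [and_self, if_pos rfl, mul_one]
        rw [rowsum i x]; simp
      · have hz : ∀ q : {j : Fin n // j ≠ 0} × Fin n,
            ¬(x = L i q.1.val q.2 ∧ y = L i q.1.val q.2) := by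
          rintro q ⟨h1, h2⟩; exact hxy (h1.trans h2.symm)
        rw [Finset.sum_eq_zero (fun q _ => if_neg (hz q))]
        simp [hxy]
    · have key : (∑ q : {j : Fin n // j ≠ 0} × Fin n,
          (if x = L i q.1.val q.2 ∧ y = L i' q.1.val q.2 then (1:ℝ) else 0)) =
          1 - (if x = y then (1:ℝ) else 0) := by
        have e1 : (∑ q : {j : Fin n // j ≠ 0} × Fin n,
            (if x = L i q.1.val q.2 ∧ y = L i' q.1.val q.2 then (1:ℝ) else 0)) =
            ∑ j : {j : Fin n // j ≠ 0}, ∑ c,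
              (if (x, y) = (L i j.val c, L i' j.val c) then (1:ℝ) else 0) := by
          rw [Fintype.sum_prod_type]
          congr 1; ext j; congr 1; ext c
          simp [Prod.ext_iff]
        rw [e1, sum_sub0 (fun j => ∑ c, (if (x, y) = (L i j c, L i' j c) then (1:ℝ) else 0))]
        have e2 : (∑ j : Fin n, ∑ c,
            (if (x, y) = (L i j c, L i' j c) then (1:ℝ) else 0)) = 1 := by
          have h := sum_ind_bij (fun p : Fin n × Fin n => (L i p.1 p.2, L i' p.1 p.2))
            (horth i i' hii) (x, y)
          rw [Fintype.sum_prod_type] at h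
          simpa using h
        rw [e2]
        congr 1
        simp only [h0, Prod.mk.injEq]
        by_cases hxy : x = y
        · subst hxy; simp
        · rw [if_neg hxy, Finset.sum_eq_zero]
          intro c _
          rw [if_neg]
          rintro ⟨h1, h2⟩; exact hxy (h1.trans h2.symm)
      rw [key]
      simp [hii]
  · intro q
    rw [Fintype.sum_prod_type]
    have h1 : ∀ i : Fin m, (∑ x, (if x = L i q.1.val q.2 then (1:ℝ) else 0)) = 1 := by
      intro i; simp
    simp [h1]
  · intro ⟨i, x⟩
    exact rowsum i x
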